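/- Let n > a + b and let A ⊆ ([m] choose a), B ⊆ ([m] choose b) with m > a + b and a > b be cross-intersecting families. If |B| ≥ C(m−1, b−1) or |A| ≤ C(m−1, a−1), then |A| + |B| ≤ C(m−1, a−1) + C(m−1, b−1). -/

import Mathlib

set_option maxHeartbeats 1000000

open Finset Nat
open scoped FinsetFamily

private lemma choose_le_succ_of_double_lt {n i : ℕ} (h : 2 * i + 1 ≤ n) :
    n.choose i ≤ n.choose (i + 1) := by
  have key := Nat.choose_succ_right_eq n i
  have h1 : n.choose i * (i + 1) ≤ n.choose (i + 1) * (i + 1) := by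
    rw [key]; exact Nat.mul_le_mul_left _ (by omega)
  exact Nat.le_of_mul_le_mul_right h1 (by omega)

private lemma choose_mono_of_half {n i d : ℕ} (h : 2 * (i + d) ≤ n) :
    n.choose i ≤ n.choose (i + d) := by
  induction d with
  | zero => simp
  | succ d ih =>
    have h1 : n.choose i ≤ n.choose (i + d) := ih (by omega)
    have h2 : n.choose (i + d) ≤ n.choose (i + d + 1) :=
      choose_le_succ_of_double_lt (by omega)
    exact le_trans h1 h2

private lemma choose_unimodal {n i j : ℕ} (hij : i ≤ j) (h : i + j ≤ n) :
    n.choose i ≤ n.choose j := by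
  rcases le_or_gt (2 * j) n with hj | hj
  · obtain ⟨d, rfl⟩ := Nat.exists_eq_add_of_le hij
    exact choose_mono_of_half (by omega)
  · have hjn : j ≤ n := by omega
    have hsymm : n.choose j = n.choose (n - j) := (Nat.choose_symm hjn).symm
    rw [hsymm]
    obtain ⟨d, hd⟩ := Nat.exists_eq_add_of_le (show i ≤ n - j by omega)
    rw [hd]
    exact choose_mono_of_half (by omega)


variable {α β : Type*}

private lemma sized_shadow_iterate [DecidableEq α] {𝒜 : Finset (Finset α)} {r k : ℕ}
    (h : (𝒜 : Set (Finset α)).Sized r) :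
    ((∂^[k] 𝒜 : Finset (Finset α)) : Set (Finset α)).Sized (r - k) := by
  induction k generalizing r 𝒜 with
  | zero => simpa
  | succ k ih =>
    rw [Function.iterate_succ_apply]
    have := ih (Set.Sized.shadow h)
    rwa [show r - 1 - k = r - (k + 1) by omega] at this

private lemma shadow_image_map [DecidableEq α] [DecidableEq β] (f : β ↪ α)
    (𝒢 : Finset (Finset β)) :
    ∂ (𝒢.image (Finset.map f)) = (∂ 𝒢).image (Finset.map f) := by
  ext s
  simp only [mem_shadow_iff, mem_image]
  constructor
  · rintro ⟨t, ⟨u, hu, rfl⟩, y, hy, rfl⟩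
    obtain ⟨x, hx, rfl⟩ := Finset.mem_map.1 hy
    exact ⟨u.erase x, ⟨u, hu, x, hx, rfl⟩, Finset.map_erase f u x⟩
  · rintro ⟨t, ⟨u, hu, x, hx, rfl⟩, rfl⟩
    exact ⟨u.map f, ⟨u, hu, rfl⟩, f x, Finset.mem_map_of_mem f hx,
      (Finset.map_erase f u x).symm⟩

private lemma card_shadow_iterate_image_map [DecidableEq α] [DecidableEq β] (f : β ↪ α)
    (𝒢 : Finset (Finset β)) (k : ℕ) :
    #(∂^[k] (𝒢.image (Finset.map f))) = #(∂^[k] 𝒢) := by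
  induction k generalizing 𝒢 with
  | zero =>
    simp only [Function.iterate_zero, id_eq]
    exact Finset.card_image_of_injective _ (Finset.map_injective f)
  | succ k ih =>
    rw [Function.iterate_succ_apply, Function.iterate_succ_apply,
      shadow_image_map, ih]


variable {α : Type*}

private lemma lym_iterate [DecidableEq α] [Fintype α] {𝒜 : Finset (Finset α)} {r k : ℕ}
    (hk : k ≤ r) (h : (𝒜 : Set (Finset α)).Sized r) :
    (#𝒜 : ℚ) / (Fintype.card α).choose r ≤ #(∂^[k] 𝒜) / (Fintype.card α).choose (r - k) := by
  induction k generalizing r 𝒜 with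
  | zero => simpa
  | succ k ih =>
    have hr : r ≠ 0 := by omega
    calc (#𝒜 : ℚ) / (Fintype.card α).choose r
        ≤ #(∂ 𝒜) / (Fintype.card α).choose (r - 1) :=
          Finset.card_div_choose_le_card_shadow_div_choose hr h
      _ ≤ #(∂^[k] (∂ 𝒜)) / (Fintype.card α).choose (r - 1 - k) :=
          ih (by omega) (Set.Sized.shadow h)
      _ = #(∂^[k + 1] 𝒜) / (Fintype.card α).choose (r - (k + 1)) := by
          rw [Function.iterate_succ_apply, show r - 1 - k = r - (k + 1) by omega]

private lemma card_le_card_shadow_iterate [DecidableEq α] [Fintype α]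
    {𝒜 : Finset (Finset α)} {r k : ℕ} (hk : k ≤ r)
    (h : (𝒜 : Set (Finset α)).Sized r)
    (hchoose : (Fintype.card α).choose r ≤ (Fintype.card α).choose (r - k)) :
    𝒜.card ≤ (∂^[k] 𝒜).card := by
  rcases Finset.eq_empty_or_nonempty 𝒜 with rfl | ⟨s, hs⟩
  · simp
  have hrn : r ≤ Fintype.card α := by
    rw [← h hs]; exact Finset.card_le_card (Finset.subset_univ s)
  have hpos : 0 < (Fintype.card α).choose r := Nat.choose_pos hrn
  have hpos' : 0 < (Fintype.card α).choose (r - k) := lt_of_lt_of_le hpos hchoose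
  have hq := lym_iterate hk h
  rw [div_le_div_iff₀ (by positivity) (by positivity)] at hq
  have : (#𝒜 : ℚ) * (Fintype.card α).choose (r - k) ≤
      (#(∂^[k] 𝒜) : ℚ) * (Fintype.card α).choose (r - k) := by
    calc (#𝒜 : ℚ) * (Fintype.card α).choose (r - k)
        ≤ (#(∂^[k] 𝒜) : ℚ) * (Fintype.card α).choose r := hq
      _ ≤ (#(∂^[k] 𝒜) : ℚ) * (Fintype.card α).choose (r - k) := by
          apply mul_le_mul_of_nonneg_left _ (by positivity)
          exact_mod_cast hchoose
  have := le_of_mul_le_mul_right this (by positivity)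
  exact_mod_cast this

private lemma exists_initSeg_card [DecidableEq α] [LinearOrder α] [Fintype α] (r t : ℕ)
    (ht : t ≤ #(Finset.powersetCard r (Finset.univ : Finset α))) :
    ∃ 𝒞 : Finset (Finset α), Finset.Colex.IsInitSeg 𝒞 r ∧ #𝒞 = t := by
  induction t with
  | zero => exact ⟨∅, by simp, rfl⟩
  | succ t ih =>
    obtain ⟨𝒞, h𝒞, hcard⟩ := ih (by omega)
    set P := Finset.powersetCard r (Finset.univ : Finset α) with hP
    have hsub : 𝒞 ⊆ P := by
      intro x hx
      rw [Finset.mem_powersetCard]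
      exact ⟨Finset.subset_univ x, h𝒞.1 hx⟩
    have hne : (P \ 𝒞).Nonempty := by
      rw [← Finset.card_pos, Finset.card_sdiff_of_subset hsub]
      omega
    obtain ⟨s, hs, hmin⟩ := Finset.exists_min_image (P \ 𝒞) (fun x => toColex x) hne
    rw [Finset.mem_sdiff] at hs
    refine ⟨insert s 𝒞, ⟨?_, ?_⟩, ?_⟩
    · intro x hx
      rw [Finset.coe_insert, Set.mem_insert_iff] at hx
      rcases hx with rfl | hx
      · exact (Finset.mem_powersetCard.1 hs.1).2
      · exact h𝒞.1 hx
    · rintro x y hx ⟨hlt, hycard⟩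
      rw [Finset.mem_insert] at hx
      have hyP : y ∈ P := Finset.mem_powersetCard.2 ⟨Finset.subset_univ y, hycard⟩
      rcases hx with rfl | hx
      · by_cases hy𝒞 : y ∈ 𝒞
        · exact Finset.mem_insert_of_mem hy𝒞
        · exfalso
          have := hmin y (Finset.mem_sdiff.2 ⟨hyP, hy𝒞⟩)
          exact absurd hlt (not_lt.2 this)
      · exact Finset.mem_insert_of_mem (h𝒞.2 hx ⟨hlt, hycard⟩)
    · rw [Finset.card_insert_of_notMem hs.2, hcard]


private lemma hilton_core (M a b : ℕ) (hm : a + b < M + 1) (hab : b < a) (hb1 : 1 ≤ b)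
    (A B : Finset (Finset (Fin (M + 1))))
    (hA : ∀ X ∈ A, X.card = a) (hB : ∀ Y ∈ B, Y.card = b)
    (hcross : ∀ X ∈ A, ∀ Y ∈ B, (X ∩ Y).Nonempty)
    (hBlow : M.choose (b - 1) ≤ B.card) :
    A.card + B.card ≤ M.choose (a - 1) + M.choose (b - 1) := by
  have ha2 : 2 ≤ a := by omega
  obtain ⟨k, hk⟩ : ∃ k, b + a + k = M + 1 := ⟨M + 1 - b - a, by omega⟩
  have hkval : M + 1 - b - a = k := by omega
  set top : Fin (M + 1) := Fin.last M with htop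
  -- complements of B
  obtain ⟨Bc, hBc⟩ : ∃ Bc, Bc = B.image (·ᶜ) := ⟨_, rfl⟩
  have hBc_card : #Bc = #B := by
    rw [hBc]; exact card_image_of_injective _ compl_injective
  have hBc_sized : (Bc : Set (Finset (Fin (M + 1)))).Sized (M + 1 - b) := by
    rintro x hx
    rw [hBc, coe_image, Set.mem_image] at hx
    obtain ⟨y, hy, rfl⟩ := hx
    rw [Finset.card_compl, Fintype.card_fin, hB y hy]
  -- initial segment of the same size
  have hBle : #B ≤ #(powersetCard (M + 1 - b) (univ : Finset (Fin (M + 1)))) := by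
    rw [card_powersetCard, Finset.card_univ, Fintype.card_fin]
    have h1 : #B ≤ (M + 1).choose b := by
      have hsub : B ⊆ powersetCard b univ := fun x hx =>
        mem_powersetCard.2 ⟨subset_univ _, hB x hx⟩
      have := Finset.card_le_card hsub
      rwa [card_powersetCard, Finset.card_univ, Fintype.card_fin] at this
    rwa [Nat.choose_symm (by omega)]
  obtain ⟨𝒞, h𝒞init, h𝒞card⟩ := exists_initSeg_card (M + 1 - b) #B hBle
  -- cross-intersecting: A disjoint from iterated shadow of Bc
  have hdisj : Disjoint A (∂^[k] Bc) := by
    rw [Finset.disjoint_left]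
    intro s hsA hs
    rw [mem_shadow_iterate_iff_exists_sdiff] at hs
    obtain ⟨Z, hZ, hsZ, -⟩ := hs
    rw [hBc, Finset.mem_image] at hZ
    obtain ⟨y, hy, rfl⟩ := hZ
    obtain ⟨x, hx⟩ := hcross s hsA y hy
    rw [Finset.mem_inter] at hx
    exact (Finset.mem_compl.1 (hsZ hx.1)) hx.2
  have h1 : #A + #(∂^[k] Bc) ≤ (M + 1).choose a := by
    have hsub : A ∪ ∂^[k] Bc ⊆ powersetCard a univ := by
      intro s hs
      rw [mem_powersetCard]
      rcases mem_union.1 hs with h | h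
      · exact ⟨subset_univ _, hA s h⟩
      · refine ⟨subset_univ _, ?_⟩
        have := sized_shadow_iterate hBc_sized h
        rwa [show M + 1 - b - k = a by omega] at this
    have := Finset.card_le_card hsub
    rwa [Finset.card_union_of_disjoint hdisj, card_powersetCard, Finset.card_univ,
      Fintype.card_fin] at this
  have h2 : #(∂^[k] 𝒞) ≤ #(∂^[k] Bc) := by
    have := Finset.iterated_kk (k := k) hBc_sized (by omega : #𝒞 ≤ #Bc) h𝒞init
    convert this using 2 <;> congr!
  -- D = all (M+1-b)-subsets avoiding top
  obtain ⟨G, hG⟩ : ∃ G, G = (univ : Finset (Fin (M + 1))).erase top := ⟨_, rfl⟩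
  have hGcard : #G = M := by
    rw [hG, card_erase_of_mem (mem_univ _), Finset.card_univ, Fintype.card_fin]
    omega
  have hGmem : ∀ x : Fin (M + 1), x ∈ G ↔ x ≠ top := by
    intro x; rw [hG, Finset.mem_erase]; simp
  obtain ⟨D, hD⟩ : ∃ D, D = powersetCard (M + 1 - b) G := ⟨_, rfl⟩
  have hDcard : #D = M.choose (b - 1) := by
    rw [hD, card_powersetCard, hGcard, show M + 1 - b = M - (b - 1) by omega,
      Nat.choose_symm (by omega)]
  have hD𝒞 : D ⊆ 𝒞 := by
    intro s hsD
    by_contra hs𝒞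
    rw [hD, mem_powersetCard] at hsD
    have hstop : ∀ x ∈ s, x < top := fun x hx =>
      Fin.lt_last_iff_ne_last.2 ((hGmem x).1 (hsD.1 hx))
    have h𝒞sub : ∀ x ∈ 𝒞, x ⊆ G := by
      intro x hx
      have hxs : toColex x < toColex s := by
        rcases lt_trichotomy (toColex x) (toColex s) with h | h | h
        · exact h
        · have hxs' : x = s := toColex.injective h
          exact absurd (hxs' ▸ hx) hs𝒞
        · exact absurd (h𝒞init.2 hx ⟨h, hsD.2⟩) hs𝒞
      intro y hy
      have := Colex.forall_lt_mono hxs.le hstop y hy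
      exact (hGmem y).2 (Fin.lt_last_iff_ne_last.1 this)
    have hsub𝒞D : 𝒞 ⊆ D := fun x hx =>
      hD ▸ mem_powersetCard.2 ⟨h𝒞sub x hx, h𝒞init.1 hx⟩
    have hDle : #D ≤ #𝒞 := by omega
    have : 𝒞 = D := Finset.eq_of_subset_of_card_le hsub𝒞D hDle
    exact hs𝒞 (this ▸ (hD ▸ mem_powersetCard.2 hsD))
  -- F = members of 𝒞 containing top, E = them minus top
  obtain ⟨F, hF⟩ : ∃ F, F = 𝒞 \ D := ⟨_, rfl⟩
  have htopF : ∀ x ∈ F, top ∈ x := by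
    intro x hx
    rw [hF, mem_sdiff] at hx
    by_contra htopx
    refine hx.2 (hD ▸ mem_powersetCard.2 ⟨?_, h𝒞init.1 hx.1⟩)
    intro y hy
    exact (hGmem y).2 (fun h => htopx (h ▸ hy))
  have hF𝒞 : F ⊆ 𝒞 := by rw [hF]; exact sdiff_subset
  have hFcard : #F + #D = #𝒞 := by rw [hF]; exact card_sdiff_add_card_eq_card hD𝒞
  obtain ⟨E, hE⟩ : ∃ E, E = F.image (fun x => x.erase top) := ⟨_, rfl⟩
  have hEF : ∀ x ∈ F, insert top (x.erase top) = x := fun x hx =>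
    Finset.insert_erase (htopF x hx)
  have hEcard : #E = #F := by
    rw [hE]
    apply Finset.card_image_of_injOn
    intro x hx y hy h
    have h' : x.erase top = y.erase top := h
    rw [← hEF x (mem_coe.1 hx), ← hEF y (mem_coe.1 hy), h']
  have hEtop : ∀ S ∈ E, top ∉ S := by
    intro S hS
    rw [hE] at hS
    obtain ⟨x, hx, rfl⟩ := Finset.mem_image.1 hS
    exact Finset.notMem_erase _ _
  have hEsized : (E : Set (Finset (Fin (M + 1)))).Sized (M - b) := by
    rintro S hS
    rw [hE, coe_image, Set.mem_image] at hS
    obtain ⟨x, hx, rfl⟩ := hS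
    rw [Finset.card_erase_of_mem (htopF x hx), h𝒞init.1 (mem_coe.2 (hF𝒞 hx))]
    omega
  -- X₁ : all a-subsets avoiding top
  obtain ⟨X₁, hX₁⟩ : ∃ X₁, X₁ = powersetCard a G := ⟨_, rfl⟩
  have hX₁card : #X₁ = M.choose a := by rw [hX₁, card_powersetCard, hGcard]
  have hX₁sub : X₁ ⊆ ∂^[k] 𝒞 := by
    intro s hs
    rw [hX₁, mem_powersetCard] at hs
    obtain ⟨Z, hsZ, hZG, hZcard⟩ :=
      exists_subsuperset_card_eq hs.1 (by omega : #s ≤ M + 1 - b) (by omega : M + 1 - b ≤ #G)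
    rw [mem_shadow_iterate_iff_exists_sdiff]
    refine ⟨Z, hD𝒞 (hD ▸ mem_powersetCard.2 ⟨hZG, hZcard⟩), hsZ, ?_⟩
    rw [card_sdiff_of_subset hsZ, hZcard, hs.2]
    omega
  -- X₂ : iterated shadow of E, with top re-inserted
  obtain ⟨X₂, hX₂⟩ : ∃ X₂, X₂ = (∂^[k] E).image (insert top) := ⟨_, rfl⟩
  have hshadowEtop : ∀ T ∈ ∂^[k] E, top ∉ T := by
    intro T hT
    rw [mem_shadow_iterate_iff_exists_sdiff] at hT
    obtain ⟨S, hS, hTS, -⟩ := hT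
    exact fun h => hEtop S hS (hTS h)
  have hX₂card : #X₂ = #(∂^[k] E) := by
    rw [hX₂]
    apply Finset.card_image_of_injOn
    intro x hx y hy h
    have h' : insert top x = insert top y := h
    have := congrArg (fun s => Finset.erase s top) h'
    simpa [Finset.erase_insert (hshadowEtop x (mem_coe.1 hx)),
      Finset.erase_insert (hshadowEtop y (mem_coe.1 hy))] using this
  have hX₂sub : X₂ ⊆ ∂^[k] 𝒞 := by
    intro s hs
    rw [hX₂, Finset.mem_image] at hs
    obtain ⟨T, hT, rfl⟩ := hs
    have htopT := hshadowEtop T hT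
    rw [mem_shadow_iterate_iff_exists_sdiff] at hT ⊢
    obtain ⟨S, hS, hTS, hcard⟩ := hT
    rw [hE, Finset.mem_image] at hS
    obtain ⟨x, hxF, rfl⟩ := hS
    refine ⟨x, hF𝒞 hxF, ?_, ?_⟩
    · intro y hy
      rcases Finset.mem_insert.1 hy with rfl | hy
      · exact htopF x hxF
      · exact Finset.erase_subset _ _ (hTS hy)
    · have hxd : x \ insert top T = (x.erase top) \ T := by
        ext y
        simp only [Finset.mem_sdiff, Finset.mem_erase, Finset.mem_insert, not_or]
        tauto
      rw [hxd, hcard]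
  have hdisj12 : Disjoint X₁ X₂ := by
    rw [Finset.disjoint_left]
    intro s hs1 hs2
    rw [hX₁, mem_powersetCard] at hs1
    rw [hX₂, Finset.mem_image] at hs2
    obtain ⟨T, hT, rfl⟩ := hs2
    exact (hGmem top).1 (hs1.1 (Finset.mem_insert_self top T)) rfl
  have h3 : #X₁ + #X₂ ≤ #(∂^[k] 𝒞) := by
    have := Finset.card_le_card (Finset.union_subset hX₁sub hX₂sub)
    rwa [Finset.card_union_of_disjoint hdisj12] at this
  -- lower bound: the iterated shadow of E is at least as large as E
  have hEshadow : #E ≤ #(∂^[k] E) := by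
    obtain ⟨𝒢, h𝒢⟩ : ∃ 𝒢, 𝒢 = E.image (fun S => S.subtype (· ≠ top)) := ⟨_, rfl⟩
    have hrec : ∀ S ∈ E, (S.subtype (· ≠ top)).map (Function.Embedding.subtype _) = S :=
      fun S hS => Finset.subtype_map_of_mem (fun x hx h => hEtop S hS (h ▸ hx))
    have h𝒢E : 𝒢.image (Finset.map (Function.Embedding.subtype (· ≠ top))) = E := by
      rw [h𝒢, Finset.image_image]
      calc E.image _ = E.image id := Finset.image_congr (fun S hS => hrec S (mem_coe.1 hS))
        _ = E := Finset.image_id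
    have h𝒢card : #𝒢 = #E := by
      rw [h𝒢]
      apply Finset.card_image_of_injOn
      intro x hx y hy h
      have h' : x.subtype (· ≠ top) = y.subtype (· ≠ top) := h
      rw [← hrec x (mem_coe.1 hx), ← hrec y (mem_coe.1 hy), h']
    have hcardsub : Fintype.card {x : Fin (M + 1) // x ≠ top} = M := by
      simp [Fintype.card_subtype_compl]
    have h𝒢sized : (𝒢 : Set (Finset {x : Fin (M + 1) // x ≠ top})).Sized (M - b) := by
      rintro S hS
      rw [h𝒢, coe_image, Set.mem_image] at hS
      obtain ⟨x, hx, rfl⟩ := hS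
      have hfilter : Finset.filter (fun y => y ≠ top) x = x :=
        Finset.filter_true_of_mem (fun y hy h => hEtop x (mem_coe.1 hx) (h ▸ hy))
      rw [Finset.card_subtype, hfilter, hEsized hx]
    have hchoose : (Fintype.card {x : Fin (M + 1) // x ≠ top}).choose (M - b) ≤
        (Fintype.card {x : Fin (M + 1) // x ≠ top}).choose (M - b - k) := by
      rw [hcardsub, show M - b - k = a - 1 by omega,
        show M.choose (M - b) = M.choose b from Nat.choose_symm (by omega)]
      exact choose_unimodal (by omega) (by omega)
    have hle : #𝒢 ≤ #(∂^[k] 𝒢) :=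
      card_le_card_shadow_iterate (show k ≤ M - b by omega) h𝒢sized hchoose
    have heq := card_shadow_iterate_image_map (Function.Embedding.subtype (· ≠ top)) 𝒢 k
    rw [h𝒢E] at heq
    omega
  -- final accounting
  have h5 : (M + 1).choose a = M.choose (a - 1) + M.choose a := by
    obtain ⟨a', rfl⟩ : ∃ a', a = a' + 1 := ⟨a - 1, by omega⟩
    simp [Nat.choose_succ_succ]
  omega



theorem cross_intersecting_hilton_cor
    (m a b : ℕ) (hm : a + b < m) (hab : b < a)
    (A B : Finset (Finset ℕ))
    (hA : ∀ X ∈ A, X ⊆ Finset.Icc 1 m ∧ X.card = a)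
    (hB : ∀ Y ∈ B, Y ⊆ Finset.Icc 1 m ∧ Y.card = b)
    (hcross : ∀ X ∈ A, ∀ Y ∈ B, (X ∩ Y).Nonempty)
    (hcond : (m - 1).choose (b - 1) ≤ B.card ∨ A.card ≤ (m - 1).choose (a - 1)) :
    A.card + B.card ≤ (m - 1).choose (a - 1) + (m - 1).choose (b - 1) := by
  by_cases hBlow : (m - 1).choose (b - 1) ≤ B.card
  swap
  · -- |B| < C(m-1,b-1), and hcond forces |A| ≤ C(m-1,a-1)
    have hA' : A.card ≤ (m - 1).choose (a - 1) := hcond.resolve_left hBlow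
    omega
  by_cases hb0 : b = 0
  · -- b = 0 : B = {∅}, so A = ∅
    subst hb0
    have hBne : B.Nonempty := by
      rcases B.eq_empty_or_nonempty with rfl | h
      · simp [Nat.choose] at hBlow
      · exact h
    obtain ⟨Y, hY⟩ := hBne
    have hYe : Y = ∅ := Finset.card_eq_zero.1 (hB Y hY).2
    have hAe : A = ∅ := by
      rw [Finset.eq_empty_iff_forall_notMem]
      intro X hX
      have := hcross X hX Y hY
      rw [hYe] at this
      simp at this
    have hB1 : #B ≤ 1 := by
      have : B ⊆ {∅} := fun Y' hY' =>
        Finset.mem_singleton.2 (Finset.card_eq_zero.1 (hB Y' hY').2)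
      simpa using Finset.card_le_card this
    have : (m - 1).choose (0 - 1) = 1 := by simp
    rw [hAe]
    simp only [Finset.card_empty, Nat.zero_add]
    omega
  -- main case: b ≥ 1, |B| ≥ C(m-1,b-1) : transfer to Fin m
  obtain ⟨M, rfl⟩ : ∃ M, m = M + 1 := ⟨m - 1, by omega⟩
  have hM : M + 1 - 1 = M := by omega
  rw [hM] at hBlow ⊢
  obtain ⟨toFin, htoFin⟩ : ∃ toFin : Finset ℕ → Finset (Fin (M + 1)),
      toFin = fun X => univ.filter (fun i : Fin (M + 1) => (i : ℕ) + 1 ∈ X) := ⟨_, rfl⟩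
  have hmemtoFin : ∀ (X : Finset ℕ) (i : Fin (M + 1)), i ∈ toFin X ↔ (i : ℕ) + 1 ∈ X := by
    intro X i; rw [htoFin]; simp
  have hrec : ∀ X : Finset ℕ, X ⊆ Finset.Icc 1 (M + 1) →
      (toFin X).image (fun i : Fin (M + 1) => (i : ℕ) + 1) = X := by
    intro X hX
    ext x
    simp only [Finset.mem_image]
    constructor
    · rintro ⟨i, hi, rfl⟩
      exact (hmemtoFin X i).1 hi
    · intro hx
      have hxI := hX hx
      rw [Finset.mem_Icc] at hxI
      refine ⟨⟨x - 1, by omega⟩, ?_, by simp; omega⟩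
      rw [hmemtoFin]
      simpa [show x - 1 + 1 = x by omega] using hx
  have hval : Function.Injective (fun i : Fin (M + 1) => (i : ℕ) + 1) := by
    intro i j h
    have h' : (i : ℕ) + 1 = (j : ℕ) + 1 := h
    exact Fin.val_injective (by omega)
  have hcardtoFin : ∀ X : Finset ℕ, X ⊆ Finset.Icc 1 (M + 1) → #(toFin X) = #X := by
    intro X hX
    conv_rhs => rw [← hrec X hX]
    rw [Finset.card_image_of_injective _ hval]
  have hinj : ∀ X, X ⊆ Finset.Icc 1 (M + 1) → ∀ X', X' ⊆ Finset.Icc 1 (M + 1) →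
      toFin X = toFin X' → X = X' := by
    intro X hX X' hX' h
    rw [← hrec X hX, ← hrec X' hX', h]
  have hintertoFin : ∀ X Y : Finset ℕ, toFin X ∩ toFin Y = toFin (X ∩ Y) := by
    intro X Y
    ext i
    simp [hmemtoFin, Finset.mem_inter]
  obtain ⟨A', hA'def⟩ : ∃ A', A' = A.image toFin := ⟨_, rfl⟩
  obtain ⟨B', hB'def⟩ : ∃ B', B' = B.image toFin := ⟨_, rfl⟩
  have hA'card : #A' = #A := by
    rw [hA'def]
    exact Finset.card_image_of_injOn fun X hX Y hY h =>
      hinj X (hA X (mem_coe.1 hX)).1 Y (hA Y (mem_coe.1 hY)).1 h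
  have hB'card : #B' = #B := by
    rw [hB'def]
    exact Finset.card_image_of_injOn fun X hX Y hY h =>
      hinj X (hB X (mem_coe.1 hX)).1 Y (hB Y (mem_coe.1 hY)).1 h
  have key := hilton_core M a b hm hab (by omega) A' B'
    (by
      intro X' hX'
      rw [hA'def, Finset.mem_image] at hX'
      obtain ⟨X, hX, rfl⟩ := hX'
      rw [hcardtoFin X (hA X hX).1]
      exact (hA X hX).2)
    (by
      intro Y' hY'
      rw [hB'def, Finset.mem_image] at hY'
      obtain ⟨Y, hY, rfl⟩ := hY'
      rw [hcardtoFin Y (hB Y hY).1]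
      exact (hB Y hY).2)
    (by
      intro X' hX' Y' hY'
      rw [hA'def, Finset.mem_image] at hX'
      rw [hB'def, Finset.mem_image] at hY'
      obtain ⟨X, hX, rfl⟩ := hX'
      obtain ⟨Y, hY, rfl⟩ := hY'
      rw [hintertoFin]
      rw [← Finset.card_pos]
      have hsub : X ∩ Y ⊆ Finset.Icc 1 (M + 1) :=
        fun x hx => (hA X hX).1 (Finset.mem_inter.1 hx).1
      rw [hcardtoFin _ hsub, Finset.card_pos]
      exact hcross X hX Y hY)
    (by rw [hB'card]; exact hBlow)
  omega
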